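/- Let N be a fuzzy neighborhood operator on U, and X a fuzzy set such that 1 − N(x)(x) ≤ X(x) ≤ N(x)(x) for all x ∈ U. Then L(L(X)) ⊆ L(X) ⊆ X ⊆ H(X) ⊆ H(H(X)), where L(X)(x) = inf_y max(1 − N(x)(y), X(y)) and H(X)(x) = sup_y min(N(x)(y), X(y)). -/
import Mathlib


open Set

variable {U : Type*}

/-- The lower approximation determined by a fuzzy neighborhood operator `N`. -/
noncomputable def lowApp (N : U → U → ℝ) (X : U → ℝ) (x : U) : ℝ :=
  ⨅ y, max (1 - N x y) (X y)

/-- The upper approximation determined by a fuzzy neighborhood operator `N`. -/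
noncomputable def upApp (N : U → U → ℝ) (X : U → ℝ) (x : U) : ℝ :=
  ⨆ y, min (N x y) (X y)

lemma low_bdd (N : U → U → ℝ) (hN : ∀ x y, N x y ∈ Icc (0:ℝ) 1) (X : U → ℝ) (x : U) :
    BddBelow (Set.range fun y => max (1 - N x y) (X y)) := by
  refine ⟨0, ?_⟩
  rintro _ ⟨y, rfl⟩
  exact le_trans (by linarith [(hN x y).2]) (le_max_left _ _)

lemma up_bdd (N : U → U → ℝ) (hN : ∀ x y, N x y ∈ Icc (0:ℝ) 1) (X : U → ℝ) (x : U) :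
    BddAbove (Set.range fun y => min (N x y) (X y)) := by
  refine ⟨1, ?_⟩
  rintro _ ⟨y, rfl⟩
  exact le_trans (min_le_left _ _) (hN x y).2

theorem approx_sandwich [Nonempty U] (N : U → U → ℝ)
    (hN : ∀ x y, N x y ∈ Icc (0:ℝ) 1)
    (X : U → ℝ) (hX : ∀ x, X x ∈ Icc (0:ℝ) 1)
    (h : ∀ x, 1 - N x x ≤ X x ∧ X x ≤ N x x) :
    (∀ x, lowApp N (lowApp N X) x ≤ lowApp N X x) ∧
    (∀ x, lowApp N X x ≤ X x) ∧
    (∀ x, X x ≤ upApp N X x) ∧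
    (∀ x, upApp N X x ≤ upApp N (upApp N X) x) := by
  have hLle : ∀ x, lowApp N X x ≤ X x := by
    intro x
    calc lowApp N X x ≤ max (1 - N x x) (X x) := ciInf_le (low_bdd N hN X x) x
      _ = X x := max_eq_right (h x).1
  have hHge : ∀ x, X x ≤ upApp N X x := by
    intro x
    calc X x = min (N x x) (X x) := (min_eq_right (h x).2).symm
      _ ≤ upApp N X x := le_ciSup (up_bdd N hN X x) x
  refine ⟨?_, hLle, hHge, ?_⟩
  · intro x
    exact ciInf_mono (low_bdd N hN (lowApp N X) x)
      (fun y => max_le_max le_rfl (hLle y))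
  · intro x
    exact ciSup_mono (up_bdd N hN (upApp N X) x)
      (fun y => min_le_min le_rfl (hHge y))
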